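/- Geodesic energy-to-interference ratio formula: with v_G(θ) the geodesic between v_E (top right singular vector of H_{11}) and v_L (bottom right singular vector of H_{21}), η(θ) = ‖H_{11}v_G(θ)‖² / ‖H_{21}v_G(θ)‖² equals (cos²θ · σ_{11,1}² + sin²θ · ‖H_{11}w_E‖²) / (cos²(φ_E − θ) · σ_{21,M}² + sin²(φ_E − θ) · ‖H_{21}w_L‖²), where w_E = (v_E)^⊥-component direction toward v_L and w_L = (v_L)^⊥-component direction toward v_E. -/

import Mathlib

open Matrix

noncomputable def nsq {M : ℕ} (x : Fin M → ℂ) : ℝ := ∑ i, Complex.normSq (x i)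
noncomputable def herm {M : ℕ} (a b : Fin M → ℂ) : ℂ := ∑ i, (starRingEnd ℂ) (a i) * b i

/-- The phase u_E = (v_Eᴴ v_L)/|v_Eᴴ v_L|. -/
noncomputable def uE {M : ℕ} (vE vL : Fin M → ℂ) : ℂ :=
  herm vE vL / (‖herm vE vL‖ : ℂ)

/-- The principal angle φ_E = arccos |v_Eᴴ v_L|. -/
noncomputable def phiE {M : ℕ} (vE vL : Fin M → ℂ) : ℝ :=
  Real.arccos (‖herm vE vL‖)

/-- The direction w = [v_E u_E cos φ_E − v_L](sin φ_E)⁻¹. -/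
noncomputable def wE {M : ℕ} (vE vL : Fin M → ℂ) : Fin M → ℂ :=
  ((Real.sin (phiE vE vL) : ℂ))⁻¹ •
    ((uE vE vL * (Real.cos (phiE vE vL) : ℂ)) • vE - vL)

/-- The geodesic curve v_G(θ) = v_E u_E cos θ − w sin θ. -/
noncomputable def vG {M : ℕ} (vE vL : Fin M → ℂ) (θ : ℝ) : Fin M → ℂ :=
  (uE vE vL * (Real.cos θ : ℂ)) • vE - (Real.sin θ : ℂ) • wE vE vL


/-- The direction w_L = [v_L u_Eᴴ cos φ_E − v_E](sin φ_E)⁻¹. -/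
noncomputable def wL {M : ℕ} (vE vL : Fin M → ℂ) : Fin M → ℂ :=
  ((Real.sin (phiE vE vL) : ℂ))⁻¹ •
    (((starRingEnd ℂ) (uE vE vL) * (Real.cos (phiE vE vL) : ℂ)) • vL - vE)

lemma herm_smul_left {M : ℕ} (a : ℂ) (x y : Fin M → ℂ) :
    herm (a • x) y = (starRingEnd ℂ) a * herm x y := by
  simp [herm, Finset.mul_sum, mul_assoc]

lemma herm_smul_right {M : ℕ} (a : ℂ) (x y : Fin M → ℂ) :
    herm x (a • y) = a * herm x y := by
  simp only [herm, Pi.smul_apply, smul_eq_mul]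
  rw [Finset.mul_sum]
  exact Finset.sum_congr rfl fun i _ => by ring

lemma herm_sub_left {M : ℕ} (x y z : Fin M → ℂ) :
    herm (x - y) z = herm x z - herm y z := by
  simp [herm, sub_mul, Finset.sum_sub_distrib]

lemma herm_sub_right {M : ℕ} (x y z : Fin M → ℂ) :
    herm x (y - z) = herm x y - herm x z := by
  simp [herm, mul_sub, Finset.sum_sub_distrib]

lemma herm_comm {M : ℕ} (x y : Fin M → ℂ) :
    herm y x = (starRingEnd ℂ) (herm x y) := by
  simp [herm, map_sum, mul_comm]

lemma herm_self {M : ℕ} (x : Fin M → ℂ) : herm x x = (nsq x : ℂ) := by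
  simp only [herm, nsq]
  push_cast
  refine Finset.sum_congr rfl fun i _ => ?_
  rw [← Complex.normSq_eq_conj_mul_self]

lemma herm_mulVec {M : ℕ} (H : Matrix (Fin M) (Fin M) ℂ) (x y : Fin M → ℂ) :
    herm (H.mulVec x) (H.mulVec y) = herm x ((H.conjTranspose * H).mulVec y) := by
  have h : ∀ (a b : Fin M → ℂ), herm a b = star a ⬝ᵥ b := by
    intro a b; simp [herm, dotProduct]
  rw [h, h, star_mulVec, ← dotProduct_mulVec, mulVec_mulVec]

lemma nsq_expand {M : ℕ} (H : Matrix (Fin M) (Fin M) ℂ) (x y : Fin M → ℂ) (a b : ℂ)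
    (horth : herm (H.mulVec x) (H.mulVec y) = 0) :
    nsq (H.mulVec (a • x - b • y))
      = Complex.normSq a * nsq (H.mulVec x) + Complex.normSq b * nsq (H.mulVec y) := by
  have h2 : herm (H.mulVec y) (H.mulVec x) = 0 := by
    rw [herm_comm, horth]; simp
  have key : (nsq (H.mulVec (a • x - b • y)) : ℂ)
      = (Complex.normSq a * nsq (H.mulVec x) + Complex.normSq b * nsq (H.mulVec y) : ℝ) := by
    rw [← herm_self]
    rw [mulVec_sub, mulVec_smul, mulVec_smul]
    simp only [herm_sub_left, herm_sub_right, herm_smul_left, herm_smul_right]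
    rw [horth, h2, herm_self, herm_self]
    push_cast
    rw [Complex.normSq_eq_conj_mul_self, Complex.normSq_eq_conj_mul_self]
    ring
  exact_mod_cast key

/-- Geodesic energy-to-interference ratio formula:
η(θ) = ‖H₁₁v_G(θ)‖²/‖H₂₁v_G(θ)‖²
     = (cos²θ σ₁₁,₁² + sin²θ ‖H₁₁w_E‖²)/(cos²(φ_E−θ) σ₂₁,M² + sin²(φ_E−θ) ‖H₂₁w_L‖²). -/
theorem stmt_13 {M : ℕ} (H₁₁ H₂₁ : Matrix (Fin M) (Fin M) ℂ) (σ₁ σM : ℝ)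
    (hσ₁ : 0 ≤ σ₁) (hσM : 0 ≤ σM)
    (vE vL : Fin M → ℂ) (hE : nsq vE = 1) (hL : nsq vL = 1)
    (heigE : (H₁₁.conjTranspose * H₁₁).mulVec vE = (σ₁ ^ 2 : ℂ) • vE)
    (heigL : (H₂₁.conjTranspose * H₂₁).mulVec vL = (σM ^ 2 : ℂ) • vL)
    (h0 : 0 < ‖herm vE vL‖) (h1 : ‖herm vE vL‖ < 1)
    (θ : ℝ) (hθ0 : 0 ≤ θ) (hθ1 : θ ≤ phiE vE vL) :
    nsq (H₁₁.mulVec (vG vE vL θ)) / nsq (H₂₁.mulVec (vG vE vL θ))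
      = (Real.cos θ ^ 2 * σ₁ ^ 2 + Real.sin θ ^ 2 * nsq (H₁₁.mulVec (wE vE vL)))
        / (Real.cos (phiE vE vL - θ) ^ 2 * σM ^ 2
            + Real.sin (phiE vE vL - θ) ^ 2 * nsq (H₂₁.mulVec (wL vE vL))) := by
  set φ := phiE vE vL with hφ
  set u := uE vE vL with hu
  set c := ‖herm vE vL‖ with hc
  have hcne : (c : ℂ) ≠ 0 := by exact_mod_cast (ne_of_gt h0)
  have hcos : Real.cos φ = c := Real.cos_arccos (by linarith) h1.le
  have hsin_pos : 0 < Real.sin φ := by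
    rw [hφ, phiE, Real.sin_arccos]
    exact Real.sqrt_pos.mpr (by nlinarith)
  have hs : (Real.sin φ : ℂ) ≠ 0 := by exact_mod_cast (ne_of_gt hsin_pos)
  have habs_u : ‖u‖ = 1 := by
    rw [hu, uE, norm_div, Complex.norm_of_nonneg h0.le, div_self (ne_of_gt h0)]
  have hnsq_u : Complex.normSq u = 1 := by
    rw [Complex.normSq_eq_norm_sq, habs_u]; norm_num
  have huu : u * (starRingEnd ℂ) u = 1 := by
    rw [Complex.mul_conj, hnsq_u]; norm_num
  have hEL : herm vE vL = u * (Real.cos φ : ℂ) := by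
    rw [hcos, hu, uE, div_mul_cancel₀ _ hcne]
  have hEE : herm vE vE = 1 := by rw [herm_self, hE]; norm_num
  have hLL : herm vL vL = 1 := by rw [herm_self, hL]; norm_num
  have hLE : herm vL vE = (starRingEnd ℂ) u * (Real.cos φ : ℂ) := by
    rw [herm_comm, hEL, RingHom.map_mul, Complex.conj_ofReal]
  -- orthogonality herm vE wE = 0
  have hEwE : herm vE (wE vE vL) = 0 := by
    rw [wE, herm_smul_right, herm_sub_right, herm_smul_right, hEE, hEL]
    ring
  have hLwL : herm vL (wL vE vL) = 0 := by
    rw [wL, herm_smul_right, herm_sub_right, herm_smul_right, hLL, hLE]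
    ring
  -- orthogonality through H
  have horthE : herm (H₁₁.mulVec vE) (H₁₁.mulVec (wE vE vL)) = 0 := by
    have h := herm_mulVec H₁₁ (wE vE vL) vE
    rw [heigE, herm_smul_right] at h
    have hwEvE : herm (wE vE vL) vE = 0 := by rw [herm_comm, hEwE]; simp
    rw [herm_comm, h, hwEvE, mul_zero]; simp
  have horthL : herm (H₂₁.mulVec vL) (H₂₁.mulVec (wL vE vL)) = 0 := by
    have h := herm_mulVec H₂₁ (wL vE vL) vL
    rw [heigL, herm_smul_right] at h
    have hwLvL : herm (wL vE vL) vL = 0 := by rw [herm_comm, hLwL]; simp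
    rw [herm_comm, h, hwLvL, mul_zero]; simp
  -- norms of images of eigenvectors
  have hnE : nsq (H₁₁.mulVec vE) = σ₁ ^ 2 := by
    have : (nsq (H₁₁.mulVec vE) : ℂ) = (σ₁ ^ 2 : ℝ) := by
      rw [← herm_self, herm_mulVec, heigE, herm_smul_right, hEE]
      push_cast; ring
    exact_mod_cast this
  have hnL : nsq (H₂₁.mulVec vL) = σM ^ 2 := by
    have : (nsq (H₂₁.mulVec vL) : ℂ) = (σM ^ 2 : ℝ) := by
      rw [← herm_self, herm_mulVec, heigL, herm_smul_right, hLL]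
      push_cast; ring
    exact_mod_cast this
  -- numerator
  have hnum : nsq (H₁₁.mulVec (vG vE vL θ))
      = Real.cos θ ^ 2 * σ₁ ^ 2 + Real.sin θ ^ 2 * nsq (H₁₁.mulVec (wE vE vL)) := by
    rw [vG, nsq_expand H₁₁ vE (wE vE vL) _ _ horthE, hnE]
    rw [Complex.normSq_mul, hnsq_u, Complex.normSq_ofReal, Complex.normSq_ofReal]
    ring
  -- rewrite vG in the vL/wL frame
  have hvG : vG vE vL θ
      = ((Real.cos (φ - θ) : ℂ)) • vL - (u * (Real.sin (φ - θ) : ℂ)) • wL vE vL := by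
    funext i
    simp only [vG, wE, wL, Pi.smul_apply, Pi.sub_apply, smul_eq_mul, ← hu, ← hφ]
    have hs2 : Complex.sin (φ : ℂ) ≠ 0 := by rwa [Complex.ofReal_sin] at hs
    push_cast
    field_simp
    rw [Complex.sin_sub, Complex.cos_sub]
    linear_combination (Complex.cos (θ:ℂ) * Complex.sin (φ:ℂ) * Complex.cos (φ:ℂ) * vL i
        - Complex.sin (θ:ℂ) * Complex.cos (φ:ℂ) ^ 2 * vL i) * huu
      - Complex.sin (θ:ℂ) * vL i * Complex.sin_sq_add_cos_sq (φ:ℂ)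
  -- denominator
  have hden : nsq (H₂₁.mulVec (vG vE vL θ))
      = Real.cos (φ - θ) ^ 2 * σM ^ 2
        + Real.sin (φ - θ) ^ 2 * nsq (H₂₁.mulVec (wL vE vL)) := by
    rw [hvG, nsq_expand H₂₁ vL (wL vE vL) _ _ horthL, hnL]
    rw [Complex.normSq_mul, hnsq_u, Complex.normSq_ofReal, Complex.normSq_ofReal]
    ring
  rw [hnum, hden]
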